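/- Let n, m, l be natural numbers with m ≤ l ≤ n, let U be a family of m-element subsets of [n], and let D = {(t, t', d) : t ∈ U, t' ∈ U, d ⊆ [n], |d| = l, t ∪ t' ⊆ d} be the set of double marks. Then |D| ≤ |U| · C(n−m, l−m) · C(l, m). -/

import Mathlib

/-- The set of double marks `(t, t', d)` with `t, t' ∈ U`, `d` an `l`-subset
of `[n]` and `t ∪ t' ⊆ d`. -/
def doubleMarks (n : ℕ) (U : Finset (Finset ℕ)) (l : ℕ) :
    Finset (Finset ℕ × Finset ℕ × Finset ℕ) :=
  (U ×ˢ U ×ˢ (Finset.Icc 1 n).powersetCard l).filter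
    (fun x => x.1 ∪ x.2.1 ⊆ x.2.2)

lemma count_supersets (s t : Finset ℕ) (l : ℕ) (ht : t ⊆ s) :
    ((s.powersetCard l).filter (fun d => t ⊆ d)).card ≤
      (s.card - t.card).choose (l - t.card) := by
  have : ((s.powersetCard l).filter (fun d => t ⊆ d)).card ≤
      ((s \ t).powersetCard (l - t.card)).card := by
    apply Finset.card_le_card_of_injOn (fun d => d \ t)
    · intro d hd
      simp only [Finset.mem_coe, Finset.mem_filter, Finset.mem_powersetCard] at hd ⊢
      obtain ⟨⟨hds, hdc⟩, htd⟩ := hd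
      refine ⟨fun x hx => ?_, ?_⟩
      · simp only [Finset.mem_sdiff] at hx ⊢
        exact ⟨hds hx.1, hx.2⟩
      · rw [Finset.card_sdiff_of_subset htd, hdc]
    · intro d1 h1 d2 h2 h
      simp only [Finset.coe_filter, Set.mem_setOf_eq] at h1 h2
      have e1 : d1 = (d1 \ t) ∪ t := by
        rw [Finset.sdiff_union_self_eq_union, Finset.union_eq_left.2 h1.2]
      have e2 : d2 = (d2 \ t) ∪ t := by
        rw [Finset.sdiff_union_self_eq_union, Finset.union_eq_left.2 h2.2]
      rw [e1, e2]; exact congrArg (· ∪ t) h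
  rwa [Finset.card_powersetCard, Finset.card_sdiff_of_subset ht] at this

theorem stmt_9 (n m l : ℕ) (hml : m ≤ l) (hln : l ≤ n)
    (U : Finset (Finset ℕ)) (hU : U ⊆ (Finset.Icc 1 n).powersetCard m) :
    (doubleMarks n U l).card ≤ U.card * (n - m).choose (l - m) * l.choose m := by
  classical
  set P := (Finset.Icc 1 n).powersetCard l with hP
  have hsub : doubleMarks n U l ⊆
      U.biUnion (fun t => (P.filter (fun d => t ⊆ d)).biUnion
        (fun d => (d.powersetCard m).image (fun t' => (t, t', d)))) := by
    intro x hx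
    simp only [doubleMarks, Finset.mem_filter, Finset.mem_product] at hx
    obtain ⟨⟨ht, ht', hd⟩, hun⟩ := hx
    have htd : x.1 ⊆ x.2.2 := (Finset.union_subset_iff.1 hun).1
    have ht'd : x.2.1 ⊆ x.2.2 := (Finset.union_subset_iff.1 hun).2
    have ht'c : x.2.1.card = m := (Finset.mem_powersetCard.1 (hU ht')).2
    simp only [Finset.mem_biUnion, Finset.mem_filter, Finset.mem_image,
      Finset.mem_powersetCard]
    exact ⟨x.1, ht, x.2.2, ⟨hd, htd⟩, x.2.1, ⟨ht'd, ht'c⟩, rfl⟩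
  calc (doubleMarks n U l).card
      ≤ ∑ t ∈ U, ((P.filter (fun d => t ⊆ d)).biUnion
          (fun d => (d.powersetCard m).image (fun t' => (t, t', d)))).card :=
        (Finset.card_le_card hsub).trans (Finset.card_biUnion_le)
    _ ≤ ∑ t ∈ U, (n - m).choose (l - m) * l.choose m := by
        apply Finset.sum_le_sum
        intro t ht
        calc ((P.filter (fun d => t ⊆ d)).biUnion
              (fun d => (d.powersetCard m).image (fun t' => (t, t', d)))).card
            ≤ ∑ d ∈ P.filter (fun d => t ⊆ d),
                ((d.powersetCard m).image (fun t' => (t, t', d))).card :=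
              Finset.card_biUnion_le
          _ ≤ ∑ d ∈ P.filter (fun d => t ⊆ d), l.choose m := by
              apply Finset.sum_le_sum
              intro d hd
              have hdl : d.card = l :=
                (Finset.mem_powersetCard.1 (Finset.mem_filter.1 hd).1).2
              calc ((d.powersetCard m).image (fun t' => (t, t', d))).card
                  ≤ (d.powersetCard m).card := Finset.card_image_le
                _ = l.choose m := by rw [Finset.card_powersetCard, hdl]
          _ = (P.filter (fun d => t ⊆ d)).card * l.choose m := by
              rw [Finset.sum_const, smul_eq_mul]
          _ ≤ (n - m).choose (l - m) * l.choose m := by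
              apply Nat.mul_le_mul_right
              have htm := Finset.mem_powersetCard.1 (hU ht)
              have := count_supersets (Finset.Icc 1 n) t l htm.1
              rwa [htm.2, Nat.card_Icc, Nat.add_sub_cancel] at this
    _ = U.card * ((n - m).choose (l - m) * l.choose m) := by
        rw [Finset.sum_const, smul_eq_mul]
    _ = U.card * (n - m).choose (l - m) * l.choose m := by ring
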